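/- A free product of two locally indicable groups is locally indicable. -/

import Mathlib

/-- A group is *indicable* if it admits a surjective homomorphism onto `ℤ`. -/
def Indicable (G : Type*) [Group G] : Prop :=
  ∃ f : G →* Multiplicative ℤ, Function.Surjective f

/-- A group is *locally indicable* if every nontrivial finitely generated subgroup
is indicable. -/
def LocallyIndicable (G : Type*) [Group G] : Prop :=
  ∀ H : Subgroup G, H ≠ ⊥ → H.FG → Indicable H

open Monoid Monoid.Coprod

section Aux

/-- Indicability transfers along a surjective homomorphism onto. -/
lemma Indicable.of_surjective {G H : Type*} [Group G] [Group H] (f : G →* H)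
    (hf : Function.Surjective f) (h : Indicable H) : Indicable G := by
  obtain ⟨g, hg⟩ := h
  exact ⟨g.comp f, hg.comp hf⟩

/-- A nontrivial free group is indicable. -/
lemma indicable_of_isFreeGroup (G : Type*) [Group G] [IsFreeGroup G]
    (h : Nontrivial G) : Indicable G := by
  classical
  have hne : Nonempty (IsFreeGroup.Generators G) := by
    by_contra hempty
    rw [not_nonempty_iff] at hempty
    have htriv : ∀ v : FreeGroup (IsFreeGroup.Generators G), v = 1 := by
      intro v
      induction v using FreeGroup.induction_on with
      | C1 => rfl
      | of x => exact hempty.elim x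
      | inv_of x _ => exact hempty.elim x
      | mul x y hx hy => rw [hx, hy, one_mul]
    obtain ⟨a, b, hab⟩ := h
    apply hab
    have e := IsFreeGroup.toFreeGroup (G := G)
    have : e a = e b := by rw [htriv (e a), htriv (e b)]
    exact e.injective this
  obtain ⟨x₀⟩ := hne
  refine ⟨(FreeGroup.lift (fun _ => Multiplicative.ofAdd (1 : ℤ))).comp
    (IsFreeGroup.toFreeGroup (G := G)).toMonoidHom, ?_⟩
  intro z
  refine ⟨(IsFreeGroup.toFreeGroup (G := G)).symm (FreeGroup.of x₀ ^ (Multiplicative.toAdd z)), ?_⟩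
  have h1 : (FreeGroup.lift (fun _ : IsFreeGroup.Generators G => Multiplicative.ofAdd (1 : ℤ)))
      (FreeGroup.of x₀ ^ (Multiplicative.toAdd z)) = z := by
    rw [map_zpow, FreeGroup.lift_apply_of, ← ofAdd_zsmul]
    simp
  simpa using h1

lemma Subgroup.FG.map' {G N : Type*} [Group G] [Group N] {H : Subgroup G} (h : H.FG)
    (f : G →* N) : (H.map f).FG := by
  rw [Subgroup.fg_iff] at h ⊢
  obtain ⟨T, hT, hfin⟩ := h
  exact ⟨f '' T, by rw [← hT, MonoidHom.map_closure], hfin.image f⟩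

end Aux

section FreeKernel

variable (A B : Type*) [Group A] [Group B]

open scoped Classical in
/-- Encoding of a commutator `[a, b]` as a generator of a free group, with trivial
commutators mapped to `1`. -/
noncomputable def commGen (a : A) (b : B) : FreeGroup {p : A × B // p.1 ≠ 1 ∧ p.2 ≠ 1} :=
  if h : a ≠ 1 ∧ b ≠ 1 then FreeGroup.of ⟨(a, b), h⟩ else 1

/-- The map from the free group on nontrivial pairs into `A ∗ B`, sending a pair to its
commutator. -/
noncomputable def commHom : FreeGroup {p : A × B // p.1 ≠ 1 ∧ p.2 ≠ 1} →* Coprod A B :=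
  FreeGroup.lift fun s => inl s.1.1 * inr s.1.2 * (inl s.1.1)⁻¹ * (inr s.1.2)⁻¹

variable {A B}

lemma commHom_commGen (a : A) (b : B) :
    commHom A B (commGen A B a b) = inl a * inr b * (inl a)⁻¹ * (inr b)⁻¹ := by
  classical
  rw [commGen]
  split_ifs with h
  · simp [commHom, FreeGroup.lift_apply_of]
  · rw [not_and_or, not_not, not_not] at h
    rcases h with rfl | rfl <;> simp

/-- The state space for the Schreier rewriting process. -/
abbrev RSState (A B : Type*) [Group A] [Group B] :=
  FreeGroup {p : A × B // p.1 ≠ 1 ∧ p.2 ≠ 1} × A × B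

/-- Right multiplication by a letter of `A`, on states. -/
noncomputable def rstep (x : A) : RSState A B → RSState A B :=
  fun st => (st.1 * commGen A B st.2.1 st.2.2 * (commGen A B (st.2.1 * x) st.2.2)⁻¹,
    st.2.1 * x, st.2.2)

/-- Right multiplication by a letter of `B`, on states. -/
def sstep (y : B) : RSState A B → RSState A B :=
  fun st => (st.1, st.2.1, st.2.2 * y)

lemma rstep_mul (x x' : A) :
    (rstep (x * x') : RSState A B → RSState A B) = rstep x' ∘ rstep x := by
  funext st
  obtain ⟨u, a, b⟩ := st
  simp [rstep, mul_assoc]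

lemma rstep_one : (rstep 1 : RSState A B → RSState A B) = id := by
  funext st
  obtain ⟨u, a, b⟩ := st
  simp [rstep]

variable (A B) in
/-- The action of `A ∗ B` on states, as a monoid homomorphism into `Function.End`. -/
noncomputable def rsAct : Coprod A B →* Function.End (RSState A B) :=
  Coprod.lift
    { toFun := fun x => rstep x⁻¹
      map_one' := by
        show rstep (1 : A)⁻¹ = (1 : Function.End (RSState A B))
        rw [inv_one, rstep_one]; rfl
      map_mul' := fun x y => by
        show rstep (x * y)⁻¹ = rstep x⁻¹ ∘ rstep y⁻¹
        rw [mul_inv_rev, rstep_mul] }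
    { toFun := fun y => sstep y⁻¹
      map_one' := by
        funext st
        show sstep (1:B)⁻¹ st = st
        obtain ⟨u, a, b⟩ := st
        simp [sstep]
      map_mul' := fun x y => by
        funext st
        show sstep (x * y)⁻¹ st = (sstep x⁻¹ ∘ sstep y⁻¹) st
        obtain ⟨u, a, b⟩ := st
        simp [sstep, mul_assoc] }

/-- The "evaluation" of a state back in `A ∗ B`. -/
noncomputable def rsEval : RSState A B → Coprod A B :=
  fun st => commHom A B st.1 * inl st.2.1 * inr st.2.2

lemma rsAct_inl (m : A) : rsAct A B (inl m) = rstep m⁻¹ := by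
  rw [rsAct, Coprod.lift_apply_inl]; rfl

lemma rsAct_inr (m : B) : rsAct A B (inr m) = sstep m⁻¹ := by
  rw [rsAct, Coprod.lift_apply_inr]; rfl

lemma rsAct_mul (g h : Coprod A B) (st : RSState A B) :
    rsAct A B (g * h) st = rsAct A B g (rsAct A B h st) := by
  rw [map_mul]; rfl

lemma rsEval_rstep (m : A) (st : RSState A B) :
    rsEval (rstep m st) = rsEval st * inl m := by
  obtain ⟨u, a, b⟩ := st
  show commHom A B (u * commGen A B a b * (commGen A B (a * m) b)⁻¹) * inl (a * m) * inr b
    = commHom A B u * inl a * inr b * inl m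
  rw [map_mul, map_mul, map_inv, commHom_commGen, commHom_commGen, map_mul]
  group

lemma rsEval_sstep (y : B) (st : RSState A B) :
    rsEval (sstep y st) = rsEval st * inr y := by
  obtain ⟨u, a, b⟩ := st
  show commHom A B u * inl a * inr (b * y) = commHom A B u * inl a * inr b * inr y
  simp [map_mul, mul_assoc]

lemma rsEval_rsAct (g : Coprod A B) (st : RSState A B) :
    rsEval (rsAct A B g st) = rsEval st * g⁻¹ := by
  induction g using Coprod.induction_on' generalizing st with
  | one => rw [map_one, inv_one, mul_one]; rfl
  | inl_mul m x ih =>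
    rw [rsAct_mul, rsAct_inl, rsEval_rstep, ih, mul_inv_rev, map_inv, mul_assoc]
  | inr_mul n x ih =>
    rw [rsAct_mul, rsAct_inr, rsEval_sstep, ih, mul_inv_rev, map_inv, mul_assoc]

lemma commGen_one_left (b : B) : commGen A B 1 b = 1 := by
  rw [commGen]; simp

lemma commGen_one_right (a : A) : commGen A B a 1 = 1 := by
  rw [commGen]; simp

/-- The key property of the rewriting action: on states with trivial `A`- and `B`-components,
the action of the image of `v` under `commHom` multiplies the free-group component by `v⁻¹`. -/
lemma rsAct_commHom (v : FreeGroup {p : A × B // p.1 ≠ 1 ∧ p.2 ≠ 1})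
    (u : FreeGroup {p : A × B // p.1 ≠ 1 ∧ p.2 ≠ 1}) :
    rsAct A B (commHom A B v) (u, 1, 1) = (u * v⁻¹, 1, 1) := by
  classical
  have key : ∀ v, (∀ u, rsAct A B (commHom A B v) (u, 1, 1) = (u * v⁻¹, 1, 1)) →
      ∀ u, rsAct A B (commHom A B v⁻¹) (u, 1, 1) = (u * v, 1, 1) := by
    intro v hv u
    have h1 : rsAct A B (commHom A B v⁻¹) (rsAct A B (commHom A B v) (u * v, 1, 1))
        = (u * v, 1, 1) := by
      rw [← rsAct_mul, ← map_mul, inv_mul_cancel, map_one]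
      rfl
    rw [hv (u * v)] at h1
    rw [mul_assoc, mul_inv_cancel, mul_one] at h1
    exact h1
  induction v using FreeGroup.induction_on generalizing u with
  | C1 => simp; rfl
  | of s =>
    obtain ⟨⟨p, q⟩, hp, hq⟩ := s
    show rsAct A B (commHom A B (FreeGroup.of (⟨(p, q), hp, hq⟩ :
        {p : A × B // p.1 ≠ 1 ∧ p.2 ≠ 1}))) (u, 1, 1)
      = (u * (FreeGroup.of (⟨(p, q), hp, hq⟩ : {p : A × B // p.1 ≠ 1 ∧ p.2 ≠ 1}))⁻¹, 1, 1)
    have hcomm : commHom A B (FreeGroup.of (⟨(p, q), hp, hq⟩ :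
        {p : A × B // p.1 ≠ 1 ∧ p.2 ≠ 1})) = inl p * inr q * inl p⁻¹ * inr q⁻¹ := by
      rw [commHom, FreeGroup.lift_apply_of, map_inv, map_inv]
    rw [hcomm, rsAct_mul, rsAct_mul, rsAct_mul, rsAct_inl, rsAct_inr, rsAct_inl, rsAct_inr]
    rw [inv_inv, inv_inv]
    show rstep p⁻¹ (sstep q⁻¹ (rstep p (sstep q ((u, 1, 1) : RSState A B)))) = _
    have h1 : sstep q ((u, 1, 1) : RSState A B) = (u, 1, q) := by
      show ((u, 1, 1 * q) : RSState A B) = _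
      rw [one_mul]
    have h2 : rstep p ((u, 1, q) : RSState A B) = (u * (commGen A B p q)⁻¹, p, q) := by
      show (u * commGen A B 1 q * (commGen A B (1 * p) q)⁻¹, 1 * p, q) = _
      rw [commGen_one_left]
      simp
    have h3 : sstep q⁻¹ ((u * (commGen A B p q)⁻¹, p, q) : RSState A B)
        = (u * (commGen A B p q)⁻¹, p, 1) := by
      show ((u * (commGen A B p q)⁻¹, p, q * q⁻¹) : RSState A B) = _
      rw [mul_inv_cancel]
    have h4 : rstep p⁻¹ ((u * (commGen A B p q)⁻¹, p, 1) : RSState A B)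
        = (u * (commGen A B p q)⁻¹, 1, 1) := by
      show (u * (commGen A B p q)⁻¹ * commGen A B p 1 * (commGen A B (p * p⁻¹) 1)⁻¹,
        p * p⁻¹, (1 : B)) = _
      rw [commGen_one_right, commGen_one_right, mul_inv_cancel]
      simp
    rw [h1, h2, h3, h4]
    have h5 : commGen A B p q = FreeGroup.of
        (⟨(p, q), hp, hq⟩ : {p : A × B // p.1 ≠ 1 ∧ p.2 ≠ 1}) := by
      rw [commGen, dif_pos (⟨hp, hq⟩ : p ≠ 1 ∧ q ≠ 1)]
    rw [h5]
  | inv_of s hs => exact key _ (fun u => hs (u := u)) u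
  | mul x y hx hy =>
    rw [map_mul, rsAct_mul, hy, hx, mul_inv_rev, mul_assoc]

end FreeKernel

section FreeKernel2

variable {A B : Type*} [Group A] [Group B]

lemma commHom_injective : Function.Injective (commHom A B) := by
  rw [injective_iff_map_eq_one]
  intro v hv
  have h1 := rsAct_commHom v 1
  rw [hv, map_one] at h1
  have h2 : ((1, 1, 1) : RSState A B) = (1 * v⁻¹, 1, 1) := h1
  have h3 : (1 : FreeGroup {p : A × B // p.1 ≠ 1 ∧ p.2 ≠ 1}) = 1 * v⁻¹ :=
    congrArg Prod.fst h2
  rw [one_mul] at h3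
  rw [← inv_inv v, ← h3, inv_one]

lemma fst_commHom (v : FreeGroup {p : A × B // p.1 ≠ 1 ∧ p.2 ≠ 1}) :
    fst (commHom A B v) = 1 := by
  have : (fst.comp (commHom A B)) v = (1 : FreeGroup _ →* A) v := by
    refine DFunLike.congr_fun (FreeGroup.ext_hom _ _ fun s => ?_) v
    simp [commHom, FreeGroup.lift_apply_of]
  simpa using this

lemma snd_commHom (v : FreeGroup {p : A × B // p.1 ≠ 1 ∧ p.2 ≠ 1}) :
    snd (commHom A B v) = 1 := by
  have : (snd.comp (commHom A B)) v = (1 : FreeGroup _ →* B) v := by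
    refine DFunLike.congr_fun (FreeGroup.ext_hom _ _ fun s => ?_) v
    simp [commHom, FreeGroup.lift_apply_of]
  simpa using this

/-- Every element killed by both projections is in the range of `commHom`. -/
lemma mem_range_commHom (g : Coprod A B) (h1 : fst g = 1) (h2 : snd g = 1) :
    g ∈ (commHom A B).range := by
  have hINV := rsEval_rsAct g⁻¹ ((1, 1, 1) : RSState A B)
  have heval1 : rsEval ((1, 1, 1) : RSState A B) = 1 := by
    show commHom A B 1 * inl 1 * inr 1 = 1
    simp
  rw [heval1, inv_inv, one_mul] at hINV
  set st := rsAct A B g⁻¹ ((1, 1, 1) : RSState A B) with hst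
  have hg : commHom A B st.1 * inl st.2.1 * inr st.2.2 = g := hINV
  have ha : st.2.1 = 1 := by
    have h := congrArg (fun z => fst (M := A) (N := B) z) hg
    simpa [map_mul, fst_commHom, h1] using h
  have hb : st.2.2 = 1 := by
    have h := congrArg (fun z => snd (M := A) (N := B) z) hg
    simpa [map_mul, snd_commHom, h2] using h
  refine ⟨st.1, ?_⟩
  rw [← hg, ha, hb]
  simp

end FreeKernel2

/-- A free product of two locally indicable groups is locally indicable. -/
theorem freeProduct_locallyIndicable {A B : Type*} [Group A] [Group B]
    (hA : LocallyIndicable A) (hB : LocallyIndicable B) :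
    LocallyIndicable (Monoid.Coprod A B) := by
  intro H hne hfg
  by_cases h1 : H.map fst = ⊥
  case neg =>
    obtain ⟨f, hf⟩ := hA (H.map fst) h1 (hfg.map' fst)
    exact ⟨f.comp (fst.subgroupMap H), hf.comp (MonoidHom.subgroupMap_surjective fst H)⟩
  by_cases h2 : H.map snd = ⊥
  case neg =>
    obtain ⟨f, hf⟩ := hB (H.map snd) h2 (hfg.map' snd)
    exact ⟨f.comp (snd.subgroupMap H), hf.comp (MonoidHom.subgroupMap_surjective snd H)⟩
  rw [Subgroup.map_eq_bot_iff] at h1 h2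
  have hle : H ≤ (commHom A B).range := fun g hg =>
    mem_range_commHom g (h1 hg) (h2 hg)
  set H' := H.comap (commHom A B) with hH'
  have hiso : H' ≃* H :=
    (Subgroup.equivMapOfInjective H' _ commHom_injective).trans
      (MulEquiv.subgroupCongr (Subgroup.map_comap_eq_self hle))
  have hntH : Nontrivial H := (Subgroup.nontrivial_iff_ne_bot H).2 hne
  have hnt' : Nontrivial H' := hiso.toEquiv.nontrivial
  have hind : Indicable H' := indicable_of_isFreeGroup _ hnt'
  exact Indicable.of_surjective hiso.symm.toMonoidHom hiso.symm.surjective hind
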